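/- Let E and W be finite-dimensional real normed vector spaces and U ⊆ E open. Let J : U → (E →L[ℝ] E) be smooth with J(x) ∘ J(x) = -id, let K₀ : W →L[ℝ] W be a fixed linear map with K₀ ∘ K₀ = -id, and let L : U → (E →L[ℝ] (W →L[ℝ] W)) be smooth with L(x)(J(x)u) = -K₀ ∘ (L(x)(u)) and K₀ ∘ (L(x)(u)) = (L(x)(u)) ∘ K₀ for all x ∈ U, u ∈ E. Define the almost complex structure Ĵ on U × W by Ĵ(x,y)(u,v) = (J(x)u, K₀ v + (L(x)(u))(y)). Then for all u ∈ E and w ∈ W, writing X and Y for the constant vector fields on U × W with values (u,0) and (0,w), one has N_Ĵ(X,Y)(x,y) = 0 for all (x,y) ∈ U × W. -/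

import Mathlib

/-- The Lie bracket of two vector fields on a normed space. -/
noncomputable def lieB {G : Type*} [NormedAddCommGroup G] [NormedSpace ℝ G]
    (X Y : G → G) : G → G :=
  fun p => fderiv ℝ Y p (X p) - fderiv ℝ X p (Y p)

/-- The Nijenhuis tensor `N_J(X,Y) = [JX,JY] - J[JX,Y] - J[X,JY] - [X,Y]`. -/
noncomputable def nijenhuis {G : Type*} [NormedAddCommGroup G] [NormedSpace ℝ G]
    (J : G → G →L[ℝ] G) (X Y : G → G) : G → G :=
  fun p =>
    lieB (fun q => J q (X q)) (fun q => J q (Y q)) p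
      - J p (lieB (fun q => J q (X q)) Y p)
      - J p (lieB X (fun q => J q (Y q)) p)
      - lieB X Y p

/-- Local coordinate form of a pseudoholomorphic vector bundle structure:
`Ĵ(x,y)(u,v) = (J(x)u, K(x)v + (L(x)(u))(y))`. -/
noncomputable def Jhat {E W : Type*} [NormedAddCommGroup E] [NormedSpace ℝ E]
    [NormedAddCommGroup W] [NormedSpace ℝ W]
    (J : E → E →L[ℝ] E) (K : E → W →L[ℝ] W) (L : E → E →L[ℝ] W →L[ℝ] W) :
    E × W → (E × W) →L[ℝ] (E × W) :=
  fun p =>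
    ((J p.1).comp (ContinuousLinearMap.fst ℝ E W)).prod
      (((K p.1).comp (ContinuousLinearMap.snd ℝ E W)) +
        (((L p.1).flip p.2).comp (ContinuousLinearMap.fst ℝ E W)))

/-- Local-model form of the Lemma in the proof of Theorem 2.1 of the paper: for a
pseudoholomorphic bundle structure with constant complex structure `K₀` on the fibers
and complex-linear horizontal datum `L`, the Nijenhuis tensor vanishes whenever one
argument is vertical (normal integrability). -/
theorem nijenhuis_vertical_vanishes_of_minimal
    {E W : Type*} [NormedAddCommGroup E] [NormedSpace ℝ E] [FiniteDimensional ℝ E]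
    [NormedAddCommGroup W] [NormedSpace ℝ W] [FiniteDimensional ℝ W]
    (U : Set E) (hU : IsOpen U)
    (J : E → E →L[ℝ] E) (K₀ : W →L[ℝ] W) (L : E → E →L[ℝ] W →L[ℝ] W)
    (hJs : ContDiffOn ℝ (⊤ : ℕ∞) J U)
    (hLs : ContDiffOn ℝ (⊤ : ℕ∞) L U)
    (hJ2 : ∀ x ∈ U, (J x).comp (J x) = -ContinuousLinearMap.id ℝ E)
    (hK2 : K₀.comp K₀ = -ContinuousLinearMap.id ℝ W)
    (hL : ∀ x ∈ U, ∀ u : E, L x (J x u) = -(K₀.comp (L x u)))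
    (hLK : ∀ x ∈ U, ∀ u : E, K₀.comp (L x u) = (L x u).comp K₀) :
    ∀ p ∈ U ×ˢ (Set.univ : Set W), ∀ u : E, ∀ w : W,
      nijenhuis (Jhat J (fun _ => K₀) L)
        (fun _ => ((u, 0) : E × W)) (fun _ => ((0, w) : E × W)) p
        = (0 : E × W) := by
  rintro ⟨x, y⟩ ⟨hx, -⟩ u w
  have hJd : HasFDerivAt J (fderiv ℝ J x) x :=
    ((hJs.contDiffAt (hU.mem_nhds hx)).differentiableAt (by simp)).hasFDerivAt
  have hLd : HasFDerivAt L (fderiv ℝ L x) x :=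
    ((hLs.contDiffAt (hU.mem_nhds hx)).differentiableAt (by simp)).hasFDerivAt
  set p : E × W := (x, y) with hp
  have h1 : HasFDerivAt (fun q : E × W => J q.1)
      ((fderiv ℝ J x).comp (ContinuousLinearMap.fst ℝ E W)) p :=
    hJd.comp p hasFDerivAt_fst
  have hA := h1.clm_apply (hasFDerivAt_const u p)
  have h2 : HasFDerivAt (fun q : E × W => L q.1)
      ((fderiv ℝ L x).comp (ContinuousLinearMap.fst ℝ E W)) p :=
    by
      have := HasFDerivAt.comp (g' := fderiv ℝ L x) p hLd (hasFDerivAt_fst (𝕜 := ℝ) (E := E) (F := W))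
      exact this
  have hB0 := h2.clm_apply (hasFDerivAt_const u p)
  have hB := hB0.clm_apply hasFDerivAt_snd
  have hJX := hA.prodMk hB
  have eX : (fun q : E × W => Jhat J (fun _ => K₀) L q (u, 0))
      = fun q : E × W => ((J q.1 u, L q.1 u q.2) : E × W) := by
    funext q; simp [Jhat]
  have eY : (fun q : E × W => Jhat J (fun _ => K₀) L q (0, w))
      = fun _ : E × W => ((0, K₀ w) : E × W) := by
    funext q; simp [Jhat]
  have hD := hJX.fderiv
  simp only [nijenhuis, lieB, eX, eY, fderiv_const, Filter.EventuallyEq.fderiv_eq,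
    hD] at *
  have hcomm : K₀ ((L x u) w) = (L x u) (K₀ w) := by
    have := congrArg (fun T : W →L[ℝ] W => T w) (hLK x hx u)
    simpa using this
  simp [Jhat, hcomm, sub_eq_zero, Prod.ext_iff, hp]
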